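/- arXiv:1608.04382 — 2 statements merged into one kernel-verified Lean document; each statement's English description precedes it below -/
import Mathlib

section
/- Let F : ℝ → (n×n real matrices) be differentiable at 0 with F(s) symmetric for every s, let u : ℝ → ℝⁿ be differentiable at 0 with ‖u(s)‖ = 1 for every s, and let λ : ℝ → ℝ be differentiable at 0, with F(s) u(s) = λ(s) u(s) for every s. Assume moreover that F(0) = λ₀ · u(0) u(0)ᵀ is the rank-one matrix with λ₀ = λ(0) > 0. Then ‖u'(0)‖ ≤ ‖F'(0)‖ / λ₀, where ‖F'(0)‖ denotes the ℓ²-operator norm of the derivative matrix F'(0) and ‖u'(0)‖ the Euclidean norm. -/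
open Matrix
open scoped Matrix.Norms.L2Operator

/-- Eigenvector-derivative bound from the proof of Theorem 4.1 (real symmetric case):
if `F s` is symmetric, `u s` is a Euclidean-unit eigenvector with eigenvalue `λ s`,
everything is differentiable at `0`, and `F 0 = λ₀ • u(0) u(0)ᵀ` is rank one with
`λ₀ = λ(0) > 0`, then `‖u'(0)‖ ≤ ‖F'(0)‖ / λ₀`, where `‖F'(0)‖` is the ℓ²-operator norm
and `‖u'(0)‖` the Euclidean norm. -/
theorem stmt7 {n : ℕ} (F : ℝ → Matrix (Fin n) (Fin n) ℝ) (u : ℝ → Fin n → ℝ) (lam : ℝ → ℝ)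
    (hF : DifferentiableAt ℝ F 0) (hsymm : ∀ s, (F s).IsSymm)
    (hu : DifferentiableAt ℝ u 0) (hunit : ∀ s, ∑ i, (u s i) ^ 2 = 1)
    (hlam : DifferentiableAt ℝ lam 0)
    (heig : ∀ s, F s *ᵥ u s = lam s • u s)
    (hpos : 0 < lam 0)
    (hF0 : F 0 = lam 0 • Matrix.vecMulVec (u 0) (u 0)) :
    Real.sqrt (∑ i, (deriv u 0 i) ^ 2) ≤ ‖deriv F 0‖ / lam 0 := by
  have hFd : HasDerivAt F (deriv F 0) 0 := hF.hasDerivAt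
  have hud : HasDerivAt u (deriv u 0) 0 := hu.hasDerivAt
  have hld : HasDerivAt lam (deriv lam 0) 0 := hlam.hasDerivAt
  set A := deriv F 0 with hA
  set v := deriv u 0 with hv
  set u0 := u 0 with hu0
  set lam0 := lam 0 with hlam0
  set mu := deriv lam 0 with hmu
  -- entrywise derivatives
  have hFij : ∀ i j, HasDerivAt (fun s => F s i j) (A i j) 0 := by
    intro i j
    let ε : Matrix (Fin n) (Fin n) ℝ →ₗ[ℝ] ℝ :=
      { toFun := fun M => M i j, map_add' := fun _ _ => rfl, map_smul' := fun _ _ => rfl }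
    exact ε.toContinuousLinearMap.hasFDerivAt.comp_hasDerivAt 0 hFd
  have huj : ∀ j, HasDerivAt (fun s => u s j) (v j) 0 := by
    intro j
    exact (ContinuousLinearMap.proj j).hasFDerivAt.comp_hasDerivAt 0 hud
  -- orthogonality
  have horth : ∑ i, u0 i * v i = 0 := by
    have h1 : HasDerivAt (fun s => ∑ i, (u s i) ^ 2) (∑ i, 2 * u0 i * v i) 0 := by
      apply HasDerivAt.fun_sum
      intro i _
      have := ((huj i).fun_mul (huj i))
      have h2 : HasDerivAt (fun s => (u s i) ^ 2) (v i * u 0 i + u 0 i * v i) 0 := by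
        simpa [pow_two] using this
      exact h2.congr_deriv (by rw [hu0]; ring)
    have h0 : HasDerivAt (fun s => ∑ i, (u s i) ^ 2) 0 0 := by
      have : (fun s : ℝ => ∑ i, (u s i) ^ 2) = fun _ => (1 : ℝ) := funext fun s => hunit s
      rw [this]; exact hasDerivAt_const 0 1
    have := h1.unique h0
    have h3 : (2 : ℝ) * ∑ i, u0 i * v i = 0 := by
      rw [Finset.mul_sum]; rw [← this]; congr 1; ext i; ring
    linarith
  -- componentwise eigen-equation derivative
  have key : ∀ i, (A *ᵥ u0) i = mu * u0 i + lam0 * v i := by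
    intro i
    have hL : HasDerivAt (fun s => ∑ j, F s i j * u s j)
        (∑ j, (A i j * u0 j + F 0 i j * v j)) 0 := by
      apply HasDerivAt.fun_sum
      intro j _
      exact (hFij i j).mul (huj j)
    have hR : HasDerivAt (fun s => lam s * u s i) (mu * u0 i + lam0 * v i) 0 :=
      hld.mul (huj i)
    have heq : (fun s => ∑ j, F s i j * u s j) = fun s => lam s * u s i := by
      funext s
      have := congrFun (heig s) i
      simpa [Matrix.mulVec, dotProduct, Pi.smul_apply, smul_eq_mul,
        mul_comm] using this
    rw [heq] at hL
    have huniq := hL.unique hR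
    have hF0v : ∑ j, F 0 i j * v j = 0 := by
      have : ∀ j, F 0 i j = lam0 * (u0 i * u0 j) := by
        intro j; rw [hF0]; simp [Matrix.vecMulVec_apply, hlam0, hu0]
      calc ∑ j, F 0 i j * v j = lam0 * u0 i * ∑ j, u0 j * v j := by
            rw [Finset.mul_sum]; congr 1; ext j; rw [this j]; ring
        _ = 0 := by rw [horth]; ring
    have : (A *ᵥ u0) i = ∑ j, A i j * u0 j := rfl
    rw [this]
    have hsum : ∑ j, (A i j * u0 j + F 0 i j * v j)
        = (∑ j, A i j * u0 j) + ∑ j, F 0 i j * v j := Finset.sum_add_distrib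
    rw [hsum, hF0v, add_zero] at huniq
    linarith [huniq]
  -- norm computations
  have hAu : ∑ i, ((A *ᵥ u0) i) ^ 2 = mu ^ 2 + lam0 ^ 2 * ∑ i, v i ^ 2 := by
    have e : ∀ i, ((A *ᵥ u0) i) ^ 2
        = mu ^ 2 * u0 i ^ 2 + 2 * mu * lam0 * (u0 i * v i) + lam0 ^ 2 * v i ^ 2 := by
      intro i; rw [key i]; ring
    rw [Finset.sum_congr rfl fun i _ => e i]
    rw [Finset.sum_add_distrib, Finset.sum_add_distrib, ← Finset.mul_sum, ← Finset.mul_sum,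
      ← Finset.mul_sum, hunit 0, horth]
    ring
  have hineq : lam0 ^ 2 * ∑ i, v i ^ 2 ≤ ∑ i, ((A *ᵥ u0) i) ^ 2 := by
    rw [hAu]; nlinarith [sq_nonneg mu]
  -- operator norm bound
  set x : EuclideanSpace ℝ (Fin n) := (EuclideanSpace.equiv (Fin n) ℝ).symm u0 with hx
  have hxn : ‖x‖ = 1 := by
    rw [EuclideanSpace.norm_eq]
    have : ∀ i, ‖x i‖ ^ 2 = u0 i ^ 2 := by
      intro i; rw [Real.norm_eq_abs, sq_abs]; rfl
    rw [Finset.sum_congr rfl fun i _ => this i, hunit 0, Real.sqrt_one]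
  have hop := Matrix.l2_opNorm_mulVec A x
  rw [hxn, mul_one] at hop
  have hAux : A *ᵥ x = A *ᵥ u0 := rfl
  have hnorm : ‖(EuclideanSpace.equiv (Fin n) ℝ).symm (A *ᵥ x)‖
      = Real.sqrt (∑ i, ((A *ᵥ u0) i) ^ 2) := by
    rw [EuclideanSpace.norm_eq]
    congr 1
    apply Finset.sum_congr rfl
    intro i _
    rw [Real.norm_eq_abs, sq_abs]
    rfl
  rw [hnorm] at hop
  -- combine
  have hs1 : Real.sqrt (∑ i, v i ^ 2) = Real.sqrt (lam0 ^ 2 * ∑ i, v i ^ 2) / lam0 := by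
    rw [Real.sqrt_mul (sq_nonneg lam0), Real.sqrt_sq hpos.le]
    field_simp
  rw [hs1]
  gcongr
  exact (Real.sqrt_le_sqrt hineq).trans hop
end

section
/- Let A_c and B be m×n real matrices with A_c ≠ 0 of rank 1 and ‖B‖ ≤ ‖A_c‖ (ℓ²-operator norms). Define F(s) = (A_c + sB)ᵀ(A_c + sB). Let u : ℝ → ℝⁿ be differentiable at 0 with ‖u(s)‖ = 1 for every s, and let λ : ℝ → ℝ be differentiable at 0, with F(s) u(s) = λ(s) u(s) for every s and λ(0) = ‖A_c‖² (the unique nonzero eigenvalue of F(0) = A_cᵀA_c). Then ‖u'(0)‖ ≤ 2. -/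
open Matrix
open scoped Matrix.Norms.L2Operator

/-- Explicit eigenvector-derivative bound `‖u'(0)‖ ≤ 2` from the proof of Theorem 4.1:
with `F(s) = (A_c + sB)ᵀ (A_c + sB)`, where `A_c ≠ 0` has rank one and `‖B‖ ≤ ‖A_c‖`
(ℓ²-operator norms), if `u s` is a Euclidean-unit eigenvector of `F s` with eigenvalue
`λ s`, both differentiable at `0`, and `λ(0) = ‖A_c‖²` (the unique nonzero eigenvalue of
`F(0) = A_cᵀ A_c`), then `‖u'(0)‖ ≤ 2`. -/
theorem stmt9 {m n : ℕ} (Ac B : Matrix (Fin m) (Fin n) ℝ)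
    (hne : Ac ≠ 0) (hrank : Ac.rank = 1) (hB : ‖B‖ ≤ ‖Ac‖)
    (u : ℝ → Fin n → ℝ) (lam : ℝ → ℝ)
    (hu : DifferentiableAt ℝ u 0) (hunit : ∀ s, ∑ i, (u s i) ^ 2 = 1)
    (hlam : DifferentiableAt ℝ lam 0)
    (heig : ∀ s : ℝ, ((Ac + s • B)ᵀ * (Ac + s • B)) *ᵥ u s = lam s • u s)
    (hlam0 : lam 0 = ‖Ac‖ ^ 2) :
    Real.sqrt (∑ i, (deriv u 0 i) ^ 2) ≤ 2 := by
  classical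
  set v : Fin n → ℝ := deriv u 0 with hv
  set F0 : Matrix (Fin n) (Fin n) ℝ := Acᵀ * Ac with hF0
  set C : Matrix (Fin n) (Fin n) ℝ := Acᵀ * B + Bᵀ * Ac with hC
  set D : Matrix (Fin n) (Fin n) ℝ := Bᵀ * B with hD
  have hu' : HasDerivAt u v 0 := hu.hasDerivAt
  have hui : ∀ i, HasDerivAt (fun s => u s i) (v i) 0 := hasDerivAt_pi.mp hu'
  -- matrix expansion
  have hM : ∀ s : ℝ, (Ac + s • B)ᵀ * (Ac + s • B) = F0 + s • C + (s * s) • D := by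
    intro s
    simp only [hF0, hC, hD, transpose_add, transpose_smul, Matrix.add_mul, Matrix.mul_add,
      Matrix.smul_mul, Matrix.mul_smul, smul_smul, smul_add]
    abel
  -- componentwise eigen-equation
  have hcomp : ∀ (s : ℝ) (i : Fin n),
      (∑ j, F0 i j * u s j) + s * (∑ j, C i j * u s j) + (s * s) * (∑ j, D i j * u s j)
        = lam s * u s i := by
    intro s i
    have h := congrFun (heig s) i
    rw [hM s] at h
    have h' : ∑ x, (F0 i x + s * C i x + s * s * D i x) * u s x = lam s * u s i := by
      simpa [Matrix.add_mulVec, Matrix.smul_mulVec, Matrix.mulVec, dotProduct,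
        Pi.add_apply, Pi.smul_apply, smul_eq_mul] using h
    rw [← h']
    rw [Finset.mul_sum, Finset.mul_sum, ← Finset.sum_add_distrib, ← Finset.sum_add_distrib]
    exact Finset.sum_congr rfl fun j _ => by ring
  -- orthogonality of v and u 0
  have horth : (∑ i, u 0 i * v i) = 0 := by
    have h1 : HasDerivAt (fun s => ∑ i, (u s i) ^ 2) (∑ i, 2 * u 0 i ^ 1 * v i) 0 :=
      HasDerivAt.fun_sum fun i _ => (hui i).pow 2
    have h2 : HasDerivAt (fun s : ℝ => ∑ i, (u s i) ^ 2) 0 0 := by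
      have : (fun s : ℝ => ∑ i, (u s i) ^ 2) = fun _ => (1 : ℝ) := funext fun s => hunit s
      rw [this]; exact hasDerivAt_const 0 1
    have h3 := h1.unique h2
    have : (∑ i, 2 * u 0 i ^ 1 * v i) = 2 * ∑ i, u 0 i * v i := by
      rw [Finset.mul_sum]; exact Finset.sum_congr rfl fun i _ => by ring
    rw [this] at h3
    linarith
  -- derivative of eigen-equation at 0, componentwise
  have key : ∀ i, (F0 *ᵥ v) i + (C *ᵥ u 0) i = deriv lam 0 * u 0 i + lam 0 * v i := by
    intro i
    have p1 : HasDerivAt (fun s => ∑ j, F0 i j * u s j) (∑ j, F0 i j * v j) 0 :=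
      HasDerivAt.fun_sum fun j _ => (hui j).const_mul (F0 i j)
    have g2 : HasDerivAt (fun s => ∑ j, C i j * u s j) (∑ j, C i j * v j) 0 :=
      HasDerivAt.fun_sum fun j _ => (hui j).const_mul (C i j)
    have g3 : HasDerivAt (fun s => ∑ j, D i j * u s j) (∑ j, D i j * v j) 0 :=
      HasDerivAt.fun_sum fun j _ => (hui j).const_mul (D i j)
    have p2 : HasDerivAt (fun s : ℝ => s * (∑ j, C i j * u s j))
        (1 * (∑ j, C i j * u 0 j) + 0 * (∑ j, C i j * v j)) 0 :=
      (hasDerivAt_id 0).mul g2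
    have psq : HasDerivAt (fun s : ℝ => s * s) (1 * 0 + 0 * 1) 0 :=
      (hasDerivAt_id 0).mul (hasDerivAt_id 0)
    have p3 : HasDerivAt (fun s : ℝ => (s * s) * (∑ j, D i j * u s j))
        ((1 * 0 + 0 * 1) * (∑ j, D i j * u 0 j) + (0 * 0) * (∑ j, D i j * v j)) 0 :=
      psq.mul g3
    have hL : HasDerivAt (fun s : ℝ =>
        (∑ j, F0 i j * u s j) + s * (∑ j, C i j * u s j) + (s * s) * (∑ j, D i j * u s j))
        ((∑ j, F0 i j * v j) + (1 * (∑ j, C i j * u 0 j) + 0 * (∑ j, C i j * v j))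
          + ((1 * 0 + 0 * 1) * (∑ j, D i j * u 0 j) + (0 * 0) * (∑ j, D i j * v j))) 0 :=
      (p1.add p2).add p3
    have hR : HasDerivAt (fun s => lam s * u s i)
        (deriv lam 0 * u 0 i + lam 0 * v i) 0 :=
      hlam.hasDerivAt.mul (hui i)
    have heqf : (fun s : ℝ =>
        (∑ j, F0 i j * u s j) + s * (∑ j, C i j * u s j) + (s * s) * (∑ j, D i j * u s j))
        = fun s => lam s * u s i := funext fun s => hcomp s i
    rw [heqf] at hL
    have := hL.unique hR
    simp only [Matrix.mulVec, dotProduct]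
    rw [← this]; ring
  -- F0 *ᵥ u 0 = lam 0 • u 0
  have hF0u0 : F0 *ᵥ u 0 = lam 0 • u 0 := by
    have h := heig 0
    rw [hM 0] at h
    simpa using h
  have hAcpos : (0 : ℝ) < ‖Ac‖ := norm_pos_iff.mpr hne
  have hlampos : (0 : ℝ) < lam 0 := by rw [hlam0]; positivity
  have hu0ne : u 0 ≠ 0 := by
    intro h
    have := hunit 0
    rw [h] at this
    simp at this
  -- rank-1 structure : F0 *ᵥ v ∈ span {u 0}
  have hrk : F0.rank = 1 := by rw [hF0, Matrix.rank_transpose_mul_self, hrank]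
  have hu0mem : u 0 ∈ LinearMap.range F0.mulVecLin := by
    refine ⟨(lam 0)⁻¹ • u 0, ?_⟩
    rw [Matrix.mulVecLin_apply, Matrix.mulVec_smul, hF0u0, smul_smul,
      inv_mul_cancel₀ hlampos.ne', one_smul]
  have hspan : (Submodule.span ℝ {u 0}) = LinearMap.range F0.mulVecLin := by
    refine Submodule.eq_of_le_of_finrank_le (Submodule.span_le.mpr ?_) ?_
    · intro x hx; rw [Set.mem_singleton_iff] at hx; rw [hx]; exact hu0mem
    · rw [finrank_span_singleton hu0ne]
      exact le_of_eq hrk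
  have hFv : ∃ c : ℝ, F0 *ᵥ v = c • u 0 := by
    have : F0 *ᵥ v ∈ Submodule.span ℝ {u 0} := by
      rw [hspan]; exact ⟨v, rfl⟩
    obtain ⟨c, hc⟩ := Submodule.mem_span_singleton.mp this
    exact ⟨c, hc.symm⟩
  obtain ⟨c, hc⟩ := hFv
  -- dot the derivative identity with v
  have hdot : lam 0 * (∑ i, v i * v i) = ∑ i, v i * (C *ᵥ u 0) i := by
    have h1 : ∑ i, v i * ((F0 *ᵥ v) i + (C *ᵥ u 0) i)
        = ∑ i, v i * (deriv lam 0 * u 0 i + lam 0 * v i) :=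
      Finset.sum_congr rfl fun i _ => by rw [key i]
    have hFvc : ∑ i, v i * (F0 *ᵥ v) i = c * ∑ i, u 0 i * v i := by
      rw [hc, Finset.mul_sum]
      exact Finset.sum_congr rfl fun i _ => by simp [Pi.smul_apply, smul_eq_mul]; ring
    have hexp1 : ∑ i, v i * ((F0 *ᵥ v) i + (C *ᵥ u 0) i)
        = (∑ i, v i * (F0 *ᵥ v) i) + ∑ i, v i * (C *ᵥ u 0) i := by
      rw [← Finset.sum_add_distrib]
      exact Finset.sum_congr rfl fun i _ => by ring
    have hexp2 : ∑ i, v i * (deriv lam 0 * u 0 i + lam 0 * v i)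
        = deriv lam 0 * (∑ i, u 0 i * v i) + lam 0 * ∑ i, v i * v i := by
      rw [Finset.mul_sum, Finset.mul_sum, ← Finset.sum_add_distrib]
      exact Finset.sum_congr rfl fun i _ => by ring
    rw [hexp1, hexp2, hFvc, horth] at h1
    simpa using h1.symm
  -- move to Euclidean space
  set ev : EuclideanSpace ℝ (Fin n) := (WithLp.equiv 2 (Fin n → ℝ)).symm v with hev
  set eu : EuclideanSpace ℝ (Fin n) := (WithLp.equiv 2 (Fin n → ℝ)).symm (u 0) with heu
  set ew : EuclideanSpace ℝ (Fin n) := (WithLp.equiv 2 (Fin n → ℝ)).symm (C *ᵥ u 0) with hew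
  have hnormsq : ∑ i, v i * v i = ‖ev‖ ^ 2 := by
    rw [← real_inner_self_eq_norm_sq]
    simp only [hev, PiLp.inner_apply, RCLike.inner_apply, WithLp.equiv_symm_apply, PiLp.toLp_apply, conj_trivial]
  have hinner : ∑ i, v i * (C *ᵥ u 0) i = (inner ℝ ev ew : ℝ) := by
    simp [hev, hew, PiLp.inner_apply, RCLike.inner_apply, WithLp.equiv_symm_apply, PiLp.toLp_apply]
    exact Finset.sum_congr rfl fun i _ => mul_comm _ _
  have heunorm : ‖eu‖ = 1 := by
    rw [heu, EuclideanSpace.norm_eq]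
    simp only [WithLp.equiv_symm_apply, PiLp.toLp_apply, Real.norm_eq_abs, sq_abs]
    rw [hunit 0, Real.sqrt_one]
  have hCw : ‖ew‖ ≤ ‖C‖ := by
    have := C.l2_opNorm_mulVec eu
    rwa [heunorm, mul_one] at this
  have htrans : ∀ (M : Matrix (Fin m) (Fin n) ℝ), ‖Mᵀ‖ = ‖M‖ := by
    intro M
    have : Mᵀ = Mᴴ := by ext i j; simp [Matrix.conjTranspose_apply]
    rw [this, M.l2_opNorm_conjTranspose]
  have hCnorm : ‖C‖ ≤ 2 * ‖Ac‖ ^ 2 := by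
    calc ‖C‖ ≤ ‖Acᵀ * B‖ + ‖Bᵀ * Ac‖ := norm_add_le _ _
      _ ≤ ‖Acᵀ‖ * ‖B‖ + ‖Bᵀ‖ * ‖Ac‖ :=
          add_le_add (Acᵀ.l2_opNorm_mul B) (Bᵀ.l2_opNorm_mul Ac)
      _ = ‖Ac‖ * ‖B‖ + ‖B‖ * ‖Ac‖ := by rw [htrans Ac, htrans B]
      _ ≤ ‖Ac‖ * ‖Ac‖ + ‖Ac‖ * ‖Ac‖ := by nlinarith [norm_nonneg B, norm_nonneg Ac]
      _ = 2 * ‖Ac‖ ^ 2 := by ring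
  -- conclude
  have hmain : lam 0 * ‖ev‖ ^ 2 ≤ (2 * ‖Ac‖ ^ 2) * ‖ev‖ := by
    have h1 : lam 0 * ‖ev‖ ^ 2 = (inner ℝ ev ew : ℝ) := by rw [← hnormsq, hdot, hinner]
    have h2 : (inner ℝ ev ew : ℝ) ≤ ‖ev‖ * ‖ew‖ := real_inner_le_norm ev ew
    have h3 : ‖ev‖ * ‖ew‖ ≤ ‖ev‖ * (2 * ‖Ac‖ ^ 2) :=
      mul_le_mul_of_nonneg_left (hCw.trans hCnorm) (norm_nonneg ev)
    nlinarith
  have hfin : ‖ev‖ ≤ 2 := by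
    rw [hlam0] at hmain
    have hp : (0:ℝ) < ‖Ac‖ ^ 2 := by positivity
    have h5 : ‖Ac‖ ^ 2 * ‖ev‖ ^ 2 ≤ ‖Ac‖ ^ 2 * (2 * ‖ev‖) := by nlinarith [hmain]
    have h4 : ‖ev‖ ^ 2 ≤ 2 * ‖ev‖ := le_of_mul_le_mul_left h5 hp
    rcases eq_or_lt_of_le (norm_nonneg ev) with h0 | h0
    · rw [← h0]; norm_num
    · rw [sq] at h4
      exact le_of_mul_le_mul_right h4 h0
  have : Real.sqrt (∑ i, v i ^ 2) = ‖ev‖ := by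
    rw [hev, EuclideanSpace.norm_eq]
    simp only [WithLp.equiv_symm_apply, PiLp.toLp_apply, Real.norm_eq_abs, sq_abs]
  rw [this]
  exact hfin
end
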